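/- Let n ≥ 1, c > 0 and ε > 0. Define 𝒟̃_n(1+t) := (1+t)^{2 − n/2} if n ≤ 3, (ln(e+t))^{1/2} if n = 4, and (1+t)^{1 − n/4} if n ≥ 5. Then there is a constant C > 0 such that for all t ≥ 0, ‖ |ξ|^{−2} |sin(|ξ|t/2)|² e^{−c|ξ|²t} ‖_{L²(|ξ|<ε)} ≤ C 𝒟̃_n(1+t). -/

import Mathlib

open MeasureTheory

/-- The time-dependent function `𝒟̃_n(1+t)`: `(1+t)^{2 - n/2}` if `n ≤ 3`,
`(ln(e+t))^{1/2}` if `n = 4`, `(1+t)^{1 - n/4}` if `n ≥ 5`. -/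
noncomputable def calDTilde (n : ℕ) (t : ℝ) : ℝ :=
  if n ≤ 3 then (1 + t) ^ ((2 : ℝ) - (n : ℝ) / 2)
  else if n = 4 then (Real.log (Real.exp 1 + t)) ^ ((1 : ℝ) / 2)
  else (1 + t) ^ ((1 : ℝ) - (n : ℝ) / 4)

open Real Set
open scoped ENNReal NNReal

theorem exp_neg_le' (x s : ℝ) (hx : 0 < x) (hs : 0 < s) :
    Real.exp (-x) ≤ s ^ s * (x ^ s)⁻¹ := by
  have key : x ^ s * Real.exp (-x) ≤ s ^ s * Real.exp (-s) := by
    rw [Real.rpow_def_of_pos hx, Real.rpow_def_of_pos hs, ← Real.exp_add, ← Real.exp_add]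
    apply Real.exp_le_exp.2
    have h1 : Real.log (x / s) ≤ x / s - 1 := Real.log_le_sub_one_of_pos (by positivity)
    rw [Real.log_div hx.ne' hs.ne'] at h1
    have := mul_le_mul_of_nonneg_left h1 hs.le
    have hxs : s * (x / s) = x := by field_simp
    nlinarith
  have h2 : Real.exp (-s) ≤ 1 := Real.exp_le_one_iff.2 (by linarith)
  have hxp : (0:ℝ) < x ^ s := Real.rpow_pos_of_pos hx s
  have hsp : (0:ℝ) < s ^ s := Real.rpow_pos_of_pos hs s
  rw [mul_comm (x ^ s) _, ← le_div_iff₀ hxp, div_eq_mul_inv] at key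
  calc Real.exp (-x) ≤ s ^ s * Real.exp (-s) * (x ^ s)⁻¹ := key
    _ ≤ s ^ s * 1 * (x ^ s)⁻¹ := by
        gcongr
    _ = s ^ s * (x ^ s)⁻¹ := by ring


lemma integral_Ioc_rpow0 {a : ℝ} (ha : 0 < a) {p : ℝ} (hp : -1 < p) :
    ∫ y in Ioc (0:ℝ) a, y ^ p = a ^ (p+1) / (p+1) := by
  rw [← intervalIntegral.integral_of_le ha.le, integral_rpow (Or.inl hp),
    Real.zero_rpow (by linarith), sub_zero]

lemma integrableOn_Ioc_rpow0 {a b : ℝ} (hab : a ≤ b) {p : ℝ} (hp : -1 < p) :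
    IntegrableOn (fun y : ℝ => y ^ p) (Ioc a b) :=
  (intervalIntegrable_iff_integrableOn_Ioc_of_le hab).1
    (intervalIntegral.intervalIntegrable_rpow' hp)

lemma split_bound {φ g₁ g₂ : ℝ → ℝ} {a r₀ : ℝ} (h : a ≤ r₀)
    (hφ : IntegrableOn φ (Ioi a)) (hg₁ : IntegrableOn g₁ (Ioc a r₀))
    (hg₂ : IntegrableOn g₂ (Ioi r₀))
    (h₁ : ∀ y ∈ Ioc a r₀, φ y ≤ g₁ y) (h₂ : ∀ y ∈ Ioi r₀, φ y ≤ g₂ y) :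
    ∫ y in Ioi a, φ y ≤ (∫ y in Ioc a r₀, g₁ y) + ∫ y in Ioi r₀, g₂ y := by
  have hsub1 : Ioc a r₀ ⊆ Ioi a := Ioc_subset_Ioi_self
  have hsub2 : Ioi r₀ ⊆ Ioi a := Ioi_subset_Ioi h
  rw [← Ioc_union_Ioi_eq_Ioi h,
    setIntegral_union Ioc_disjoint_Ioi_same measurableSet_Ioi
      (hφ.mono_set hsub1) (hφ.mono_set hsub2)]
  exact add_le_add
    (setIntegral_mono_on (hφ.mono_set hsub1) hg₁ measurableSet_Ioc h₁)
    (setIntegral_mono_on (hφ.mono_set hsub2) hg₂ measurableSet_Ioi h₂)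

lemma integrableOn_phi (n : ℕ) (hn : 1 ≤ n) {b M : ℝ} (hb : 0 < b) (hM : 0 ≤ M) :
    IntegrableOn
      (fun y : ℝ => y ^ (n-1) * (min ((y^4)⁻¹) M * Real.exp (-b * y^2))) (Ioi 0) := by
  have hp : (-1:ℝ) < ((n:ℝ) - 1) := by
    have : (1:ℝ) ≤ n := by exact_mod_cast hn
    linarith
  have hint : IntegrableOn (fun y : ℝ => M * (y ^ ((n:ℝ)-1) * Real.exp (-b * y^2)))
      (Ioi 0) := ((integrable_rpow_mul_exp_neg_mul_sq hb hp).const_mul M).integrableOn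
  refine hint.mono' ?_ ?_
  · apply Measurable.aestronglyMeasurable
    fun_prop
  · rw [ae_restrict_iff' measurableSet_Ioi]
    refine Filter.Eventually.of_forall fun y hy => ?_
    have hy0 : (0:ℝ) < y := hy
    have h1 : (0:ℝ) ≤ min ((y^4)⁻¹) M := le_min (by positivity) hM
    have h2 : (0:ℝ) ≤ y ^ (n-1) := by positivity
    have hnp : y ^ (n-1) = y ^ ((n:ℝ)-1) := by
      rw [← Real.rpow_natCast y (n-1)]
      congr 1
      rw [Nat.cast_sub hn, Nat.cast_one]
    rw [Real.norm_eq_abs, abs_of_nonneg (by positivity)]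
    calc y ^ (n-1) * (min ((y^4)⁻¹) M * Real.exp (-b * y^2))
        ≤ y ^ (n-1) * (M * Real.exp (-b * y^2)) := by
          gcongr; exact min_le_right _ _
      _ = M * (y ^ ((n:ℝ)-1) * Real.exp (-b * y^2)) := by rw [← hnp]; ring

lemma npow_eq_rpow_sub (n : ℕ) (hn : 1 ≤ n) {y : ℝ} (hy : 0 < y) :
    y ^ (n-1) = y ^ ((n:ℝ)-1) := by
  rw [← Real.rpow_natCast y (n-1)]
  congr 1
  rw [Nat.cast_sub hn, Nat.cast_one]

lemma phi_le_pow_exp (n : ℕ) (hn : 1 ≤ n) {y b M : ℝ} (hy : 0 < y) (hb : 0 < b) :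
    y ^ (n-1) * (min ((y^4)⁻¹) M * Real.exp (-b * y^2))
      ≤ y ^ ((n:ℝ)-5) * Real.exp (-b * y^2) := by
  have h4 : (y^4)⁻¹ = y ^ (-4:ℝ) := by
    rw [← Real.rpow_natCast y 4, ← Real.rpow_neg hy.le]; norm_num
  calc y ^ (n-1) * (min ((y^4)⁻¹) M * Real.exp (-b * y^2))
      ≤ y ^ (n-1) * ((y^4)⁻¹ * Real.exp (-b * y^2)) :=
        mul_le_mul_of_nonneg_left
          (mul_le_mul_of_nonneg_right (min_le_left _ _) (Real.exp_pos _).le)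
          (by positivity)
    _ = y ^ ((n:ℝ)-5) * Real.exp (-b * y^2) := by
        rw [npow_eq_rpow_sub n hn hy, h4, ← mul_assoc, ← Real.rpow_add hy]
        congr 1
        ring

lemma phi_le_pow (n : ℕ) (hn : 1 ≤ n) {y b M : ℝ} (hy : 0 < y) (hb : 0 < b) :
    y ^ (n-1) * (min ((y^4)⁻¹) M * Real.exp (-b * y^2)) ≤ y ^ ((n:ℝ)-5) := by
  refine (phi_le_pow_exp n hn hy hb).trans ?_
  have : Real.exp (-b * y^2) ≤ 1 := Real.exp_le_one_iff.2 (by nlinarith [sq_nonneg y])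
  calc y ^ ((n:ℝ)-5) * Real.exp (-b * y^2) ≤ y ^ ((n:ℝ)-5) * 1 :=
        mul_le_mul_of_nonneg_left this (by positivity)
    _ = y ^ ((n:ℝ)-5) := mul_one _

lemma phi_le_M_pow (n : ℕ) (hn : 1 ≤ n) {y b M : ℝ} (hy : 0 < y) (hb : 0 < b) (hM : 0 ≤ M) :
    y ^ (n-1) * (min ((y^4)⁻¹) M * Real.exp (-b * y^2)) ≤ M * y ^ ((n:ℝ)-1) := by
  have : Real.exp (-b * y^2) ≤ 1 := Real.exp_le_one_iff.2 (by nlinarith [sq_nonneg y])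
  calc y ^ (n-1) * (min ((y^4)⁻¹) M * Real.exp (-b * y^2))
      ≤ y ^ (n-1) * (M * 1) :=
        mul_le_mul_of_nonneg_left
          (mul_le_mul (min_le_right _ _) this (Real.exp_pos _).le hM)
          (by positivity)
    _ = M * y ^ ((n:ℝ)-1) := by rw [npow_eq_rpow_sub n hn hy]; ring

lemma onedim_le3 (n : ℕ) (hn : 1 ≤ n) (hn3 : n ≤ 3) (c : ℝ) (hc : 0 < c) (t : ℝ) (ht : 0 ≤ t) :
    ∫ y in Ioi (0:ℝ),
        y ^ (n-1) * (min ((y^4)⁻¹) ((1+t)^4) * Real.exp (-(c*(1+t)) * y^2))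
      ≤ 2 * (1+t) ^ ((4:ℝ) - n) := by
  set τ : ℝ := 1 + t with hτdef
  have hτ1 : (1:ℝ) ≤ τ := by simp [hτdef]; linarith
  have hτ0 : (0:ℝ) < τ := by linarith
  have hb : (0:ℝ) < c * τ := by positivity
  have hM : (0:ℝ) ≤ τ^4 := by positivity
  have hnR : (1:ℝ) ≤ (n:ℝ) := by exact_mod_cast hn
  have hnR3 : (n:ℝ) ≤ 3 := by exact_mod_cast hn3
  have hr₀ : (0:ℝ) < τ⁻¹ := by positivity
  have hφ : IntegrableOn
      (fun y : ℝ => y ^ (n-1) * (min ((y^4)⁻¹) (τ^4) * Real.exp (-(c*τ) * y^2))) (Ioi 0) :=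
    integrableOn_phi n hn hb hM
  have key := split_bound (g₁ := fun y => τ^4 * y ^ ((n:ℝ)-1))
      (g₂ := fun y => y ^ ((n:ℝ)-5)) hr₀.le hφ
      ((integrableOn_Ioc_rpow0 hr₀.le (by linarith)).const_mul _)
      (integrableOn_Ioi_rpow_of_lt (by linarith) hr₀)
      (fun y hy => phi_le_M_pow n hn hy.1 hb hM)
      (fun y hy => phi_le_pow n hn (hr₀.trans hy) hb)
  refine key.trans ?_
  have e₁ : ∫ y in Ioc (0:ℝ) τ⁻¹, τ^4 * y ^ ((n:ℝ)-1)
      = τ^4 * ((τ⁻¹) ^ ((n:ℝ)-1+1) / ((n:ℝ)-1+1)) := by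
    rw [integral_const_mul, integral_Ioc_rpow0 hr₀ (by linarith)]
  have e₂ : ∫ y in Ioi τ⁻¹, y ^ ((n:ℝ)-5)
      = -(τ⁻¹) ^ ((n:ℝ)-5+1) / ((n:ℝ)-5+1) := integral_Ioi_rpow_of_lt (by linarith) hr₀
  rw [e₁, e₂]
  have hpow : ∀ p : ℝ, (τ⁻¹) ^ p = τ ^ (-p) := fun p => by
    rw [← Real.rpow_neg_one τ, ← Real.rpow_mul hτ0.le]
    congr 1; ring
  have h₁ : τ^4 * ((τ⁻¹) ^ ((n:ℝ)-1+1) / ((n:ℝ)-1+1)) ≤ τ ^ ((4:ℝ) - n) := by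
    rw [hpow]
    have heq : τ^4 * τ ^ (-((n:ℝ)-1+1)) = τ ^ ((4:ℝ) - n) := by
      rw [← Real.rpow_natCast τ 4, ← Real.rpow_add hτ0]
      congr 1
      push_cast
      ring
    calc τ^4 * (τ ^ (-((n:ℝ)-1+1)) / ((n:ℝ)-1+1))
        ≤ τ^4 * τ ^ (-((n:ℝ)-1+1)) :=
          mul_le_mul_of_nonneg_left
            (div_le_self (by positivity) (by linarith)) (by positivity)
      _ = τ ^ ((4:ℝ) - n) := heq
  have h₂ : -(τ⁻¹) ^ ((n:ℝ)-5+1) / ((n:ℝ)-5+1) ≤ τ ^ ((4:ℝ) - n) := by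
    rw [hpow]
    have hne : (n:ℝ)-5+1 ≤ -1 := by linarith
    have hval : -τ ^ (-((n:ℝ)-5+1)) / ((n:ℝ)-5+1) = τ ^ ((4:ℝ)-n) / (4 - n) := by
      rw [show -((n:ℝ)-5+1) = (4:ℝ) - n by ring]
      rw [div_eq_div_iff (by linarith) (by linarith)]
      ring
    rw [hval]
    exact div_le_self (by positivity) (by linarith)
  linarith


lemma onedim_eq4 (c : ℝ) (hc : 0 < c) (t : ℝ) (ht : 0 ≤ t) :
    ∫ y in Ioi (0:ℝ),
        y ^ (4-1) * (min ((y^4)⁻¹) ((1+t)^4) * Real.exp (-(c*(1+t)) * y^2))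
      ≤ (2 + c⁻¹^2) * Real.log (Real.exp 1 + t) := by
  set τ : ℝ := 1 + t with hτdef
  have hτ1 : (1:ℝ) ≤ τ := by simp [hτdef]; linarith
  have hτ0 : (0:ℝ) < τ := by linarith
  have hb : (0:ℝ) < c * τ := by positivity
  have hM : (0:ℝ) ≤ τ^4 := by positivity
  have hr₀ : (0:ℝ) < τ⁻¹ := by positivity
  have hr₀1 : τ⁻¹ ≤ 1 := by
    rw [inv_le_one_iff₀]; right; exact hτ1
  have hrp2 : ∀ x : ℝ, x ^ (2:ℝ) = x ^ (2:ℕ) := fun x => by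
    rw [← Real.rpow_natCast x 2]; norm_num
  have hφ : IntegrableOn
      (fun y : ℝ => y ^ (4-1) * (min ((y^4)⁻¹) (τ^4) * Real.exp (-(c*τ) * y^2))) (Ioi 0) :=
    integrableOn_phi 4 (by norm_num) hb hM
  -- the three majorants
  have hg1 : IntegrableOn (fun y : ℝ => τ^4 * y ^ ((4:ℝ)-1)) (Ioc 0 τ⁻¹) :=
    (integrableOn_Ioc_rpow0 hr₀.le (by norm_num)).const_mul _
  have hg2 : IntegrableOn (fun y : ℝ => y⁻¹) (Ioc τ⁻¹ 1) := by
    have hcont : ContinuousOn (fun y : ℝ => y⁻¹) (Icc τ⁻¹ 1) :=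
      continuousOn_id.inv₀ fun x hx => ne_of_gt (lt_of_lt_of_le hr₀ hx.1)
    exact (hcont.integrableOn_Icc).mono_set Ioc_subset_Icc_self
  have hg3 : IntegrableOn (fun y : ℝ => c⁻¹^2 * 4 * y ^ ((-5):ℝ)) (Ioi 1) :=
    (integrableOn_Ioi_rpow_of_lt (by norm_num) one_pos).const_mul _
  -- pointwise bounds
  have hmid : ∀ y ∈ Ioc τ⁻¹ (1:ℝ),
      y ^ (4-1) * (min ((y^4)⁻¹) (τ^4) * Real.exp (-(c*τ) * y^2)) ≤ y⁻¹ := by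
    intro y hy
    have hy0 : (0:ℝ) < y := lt_of_lt_of_le hr₀ hy.1.le
    refine (phi_le_pow 4 (by norm_num) hy0 hb).trans ?_
    rw [show ((4:ℕ):ℝ) - 5 = (-1:ℝ) by norm_num, Real.rpow_neg_one]
  have htail : ∀ y ∈ Ioi (1:ℝ),
      y ^ (4-1) * (min ((y^4)⁻¹) (τ^4) * Real.exp (-(c*τ) * y^2))
        ≤ c⁻¹^2 * 4 * y ^ ((-5):ℝ) := by
    intro y hy
    have hy1 : (1:ℝ) ≤ y := le_of_lt hy
    have hy0 : (0:ℝ) < y := by linarith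
    refine (phi_le_pow_exp 4 (by norm_num) hy0 hb).trans ?_
    have hexp : Real.exp (-(c*τ) * y^2) ≤ 4 * (c^2*y^4)⁻¹ := by
      have h1 := exp_neg_le' (c*τ*y^2) 2 (by positivity) (by norm_num)
      rw [show -(c*τ*y^2) = -(c*τ) * y^2 by ring] at h1
      refine h1.trans ?_
      rw [hrp2, hrp2]
      have hle : c^2*y^4 ≤ (c*τ*y^2)^2 := by
        have h2 : (c*τ*y^2)^2 = c^2*τ^2*y^4 := by ring
        have h3 : (1:ℝ) ≤ τ^2 := by nlinarith
        rw [h2]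
        calc c^2*y^4 = c^2*1*y^4 := by ring
          _ ≤ c^2*τ^2*y^4 := by gcongr
      have : ((c*τ*y^2)^2)⁻¹ ≤ (c^2*y^4)⁻¹ := by
        apply inv_anti₀ (by positivity) hle
      calc (2:ℝ)^(2:ℕ) * ((c*τ*y^2)^(2:ℕ))⁻¹ ≤ (2:ℝ)^(2:ℕ) * (c^2*y^4)⁻¹ := by
            exact mul_le_mul_of_nonneg_left this (by norm_num)
        _ = 4 * (c^2*y^4)⁻¹ := by norm_num
    have h5 : y ^ ((-5):ℝ) = (y^(5:ℕ))⁻¹ := by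
      rw [show ((-5):ℝ) = -((5:ℕ):ℝ) by norm_num, Real.rpow_neg hy0.le, Real.rpow_natCast]
    rw [show ((4:ℕ):ℝ) - 5 = (-1:ℝ) by norm_num, Real.rpow_neg_one, h5]
    calc y⁻¹ * Real.exp (-(c*τ) * y^2)
        ≤ y⁻¹ * (4 * (c^2*y^4)⁻¹) :=
          mul_le_mul_of_nonneg_left hexp (by positivity)
      _ = c⁻¹^2 * 4 * (y^(5:ℕ))⁻¹ := by
          field_simp
  -- splitting
  have key1 := split_bound (g₁ := fun y => τ^4 * y ^ ((4:ℝ)-1))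
      (g₂ := fun y => y ^ (4-1) * (min ((y^4)⁻¹) (τ^4) * Real.exp (-(c*τ) * y^2)))
      hr₀.le hφ hg1 (hφ.mono_set (Ioi_subset_Ioi hr₀.le))
      (fun y hy => phi_le_M_pow 4 (by norm_num) hy.1 hb hM)
      (fun y _ => le_rfl)
  have key2 := split_bound (a := τ⁻¹) (g₁ := fun y : ℝ => y⁻¹)
      (g₂ := fun y : ℝ => c⁻¹^2 * 4 * y ^ ((-5):ℝ))
      hr₀1 (hφ.mono_set (Ioi_subset_Ioi hr₀.le)) hg2 hg3 hmid htail
  -- evaluations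
  have e₁ : ∫ y in Ioc (0:ℝ) τ⁻¹, τ^4 * y ^ ((4:ℝ)-1) = 1/4 := by
    rw [integral_const_mul, integral_Ioc_rpow0 hr₀ (by norm_num)]
    rw [show ((4:ℝ)-1+1) = ((4:ℕ):ℝ) by norm_num, Real.rpow_natCast, inv_pow]
    have h4 : (τ:ℝ)^4 ≠ 0 := by positivity
    field_simp
    norm_num
  have e₂ : ∫ y in Ioc τ⁻¹ (1:ℝ), y⁻¹ = Real.log τ := by
    have h0' : (0:ℝ) ∉ Set.uIcc τ⁻¹ 1 := by
      rw [Set.uIcc_of_le hr₀1]; exact fun h => absurd hr₀ (by simp [h.1]; linarith [h.1])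
    rw [← intervalIntegral.integral_of_le hr₀1, integral_inv h0', one_div, inv_inv]
  have e₃ : ∫ y in Ioi (1:ℝ), c⁻¹^2 * 4 * y ^ ((-5):ℝ) = c⁻¹^2 := by
    rw [integral_const_mul, integral_Ioi_rpow_of_lt (by norm_num) one_pos]
    rw [Real.one_rpow]
    norm_num
    ring
  -- conclude
  have hL1 : (1:ℝ) ≤ Real.log (Real.exp 1 + t) := by
    rw [Real.le_log_iff_exp_le (by positivity)]
    linarith
  have hL2 : Real.log τ ≤ Real.log (Real.exp 1 + t) := by
    apply Real.log_le_log hτ0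
    have : (1:ℝ) ≤ Real.exp 1 := by
      have := Real.add_one_le_exp 1; linarith
    rw [hτdef]; linarith
  have hc2 : (0:ℝ) ≤ c⁻¹^2 := by positivity
  calc ∫ y in Ioi (0:ℝ),
        y ^ (4-1) * (min ((y^4)⁻¹) (τ^4) * Real.exp (-(c*τ) * y^2))
      ≤ (∫ y in Ioc (0:ℝ) τ⁻¹, τ^4 * y ^ ((4:ℝ)-1)) +
        ((∫ y in Ioc τ⁻¹ (1:ℝ), y⁻¹) + ∫ y in Ioi (1:ℝ), c⁻¹^2 * 4 * y ^ ((-5):ℝ)) := by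
        refine key1.trans ?_
        exact add_le_add (le_refl _) key2
    _ = 1/4 + (Real.log τ + c⁻¹^2) := by rw [e₁, e₂, e₃]
    _ ≤ (2 + c⁻¹^2) * Real.log (Real.exp 1 + t) := by nlinarith

lemma onedim_ge5 (n : ℕ) (hn5 : 5 ≤ n) (c : ℝ) (hc : 0 < c) (t : ℝ) (ht : 0 ≤ t) :
    ∫ y in Ioi (0:ℝ),
        y ^ (n-1) * (min ((y^4)⁻¹) ((1+t)^4) * Real.exp (-(c*(1+t)) * y^2))
      ≤ (1 + ((n:ℝ)/2)^((n:ℝ)/2) * (c^((n:ℝ)/2))⁻¹) * (1+t) ^ (((4:ℝ)-n)/2) := by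
  set s : ℝ := (n:ℝ)/2 with hsdef
  set τ : ℝ := 1 + t with hτdef
  have hn : 1 ≤ n := by omega
  have hnR5 : (5:ℝ) ≤ (n:ℝ) := by exact_mod_cast hn5
  have hs0 : (0:ℝ) < s := by rw [hsdef]; linarith
  have hτ1 : (1:ℝ) ≤ τ := by rw [hτdef]; linarith
  have hτ0 : (0:ℝ) < τ := by linarith
  have hb : (0:ℝ) < c * τ := by positivity
  have hM : (0:ℝ) ≤ τ^4 := by positivity
  set r₀ : ℝ := τ ^ (-(1/2) : ℝ) with hr₀def
  have hr₀ : (0:ℝ) < r₀ := Real.rpow_pos_of_pos hτ0 _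
  have hr₀pow : ∀ p : ℝ, r₀ ^ p = τ ^ ((-(1/2)) * p) := fun p => by
    rw [hr₀def, ← Real.rpow_mul hτ0.le]
  set M₀ : ℝ := s^s * (c^s)⁻¹ * (τ^s)⁻¹ with hM₀def
  have hM₀0 : 0 ≤ M₀ := by positivity
  have hφ : IntegrableOn
      (fun y : ℝ => y ^ (n-1) * (min ((y^4)⁻¹) (τ^4) * Real.exp (-(c*τ) * y^2))) (Ioi 0) :=
    integrableOn_phi n hn hb hM
  have htail : ∀ y ∈ Ioi r₀,
      y ^ (n-1) * (min ((y^4)⁻¹) (τ^4) * Real.exp (-(c*τ) * y^2))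
        ≤ M₀ * y ^ ((-5):ℝ) := by
    intro y hy
    have hy0 : (0:ℝ) < y := hr₀.trans hy
    refine (phi_le_pow_exp n hn hy0 hb).trans ?_
    have hexp : Real.exp (-(c*τ) * y^2) ≤ s^s * (((c*τ*y^2)) ^ s)⁻¹ := by
      have h1 := exp_neg_le' (c*τ*y^2) s (by positivity) hs0
      rw [show -(c*τ*y^2) = -(c*τ) * y^2 by ring] at h1
      exact h1
    have hsplit : ((c*τ*y^2) : ℝ) ^ s = c^s * τ^s * y ^ ((n:ℝ)) := by
      rw [Real.mul_rpow (by positivity) (by positivity),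
        Real.mul_rpow hc.le hτ0.le]
      congr 1
      rw [← Real.rpow_natCast y 2, ← Real.rpow_mul hy0.le]
      congr 1
      rw [hsdef]; push_cast; ring
    have hy5 : y ^ ((n:ℝ)-5) * (y ^ ((n:ℝ)))⁻¹ = y ^ ((-5):ℝ) := by
      rw [← Real.rpow_neg hy0.le, ← Real.rpow_add hy0]
      congr 1; ring
    calc y ^ ((n:ℝ)-5) * Real.exp (-(c*τ) * y^2)
        ≤ y ^ ((n:ℝ)-5) * (s^s * (((c*τ*y^2)) ^ s)⁻¹) :=
          mul_le_mul_of_nonneg_left hexp (by positivity)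
      _ = M₀ * (y ^ ((n:ℝ)-5) * (y ^ ((n:ℝ)))⁻¹) := by
          rw [hsplit, mul_inv, mul_inv, hM₀def]
          ring
      _ = M₀ * y ^ ((-5):ℝ) := by rw [hy5]
  have key := split_bound (g₁ := fun y => y ^ ((n:ℝ)-5))
      (g₂ := fun y => M₀ * y ^ ((-5):ℝ)) hr₀.le hφ
      (integrableOn_Ioc_rpow0 hr₀.le (by linarith))
      ((integrableOn_Ioi_rpow_of_lt (by norm_num) hr₀).const_mul _)
      (fun y hy => phi_le_pow n hn hy.1 hb)
      htail
  refine key.trans ?_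
  have e₁ : ∫ y in Ioc (0:ℝ) r₀, y ^ ((n:ℝ)-5)
      = r₀ ^ ((n:ℝ)-5+1) / ((n:ℝ)-5+1) := integral_Ioc_rpow0 hr₀ (by linarith)
  have e₂ : ∫ y in Ioi r₀, M₀ * y ^ ((-5):ℝ)
      = M₀ * (-r₀ ^ ((-5:ℝ)+1) / ((-5:ℝ)+1)) := by
    rw [integral_const_mul, integral_Ioi_rpow_of_lt (by norm_num) hr₀]
  rw [e₁, e₂]
  have h₁ : r₀ ^ ((n:ℝ)-5+1) / ((n:ℝ)-5+1) ≤ τ ^ (((4:ℝ)-n)/2) := by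
    rw [hr₀pow, show (-(1/2)) * ((n:ℝ)-5+1) = ((4:ℝ)-n)/2 by ring]
    exact div_le_self (by positivity) (by linarith)
  have h₂ : M₀ * (-r₀ ^ ((-5:ℝ)+1) / ((-5:ℝ)+1))
      ≤ (s^s * (c^s)⁻¹) * τ ^ (((4:ℝ)-n)/2) := by
    have hv : -r₀ ^ ((-5:ℝ)+1) / ((-5:ℝ)+1) = τ ^ (2:ℝ) / 4 := by
      rw [hr₀pow, show (-(1/2)) * (((-5):ℝ)+1) = (2:ℝ) by ring]
      ring
    rw [hv, hM₀def]
    have hcomb : (τ^s)⁻¹ * τ ^ (2:ℝ) = τ ^ (((4:ℝ)-n)/2) := by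
      rw [← Real.rpow_neg hτ0.le, ← Real.rpow_add hτ0]
      congr 1
      rw [hsdef]; ring
    calc s^s * (c^s)⁻¹ * (τ^s)⁻¹ * (τ ^ (2:ℝ) / 4)
        ≤ s^s * (c^s)⁻¹ * (τ^s)⁻¹ * τ ^ (2:ℝ) :=
          mul_le_mul_of_nonneg_left (div_le_self (by positivity) (by norm_num))
            (by positivity)
      _ = (s^s * (c^s)⁻¹) * ((τ^s)⁻¹ * τ ^ (2:ℝ)) := by ring
      _ = (s^s * (c^s)⁻¹) * τ ^ (((4:ℝ)-n)/2) := by rw [hcomb]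
  have hτp : (0:ℝ) ≤ τ ^ (((4:ℝ)-n)/2) := by positivity
  calc r₀ ^ ((n:ℝ)-5+1) / ((n:ℝ)-5+1) + M₀ * (-r₀ ^ ((-5:ℝ)+1) / ((-5:ℝ)+1))
      ≤ τ ^ (((4:ℝ)-n)/2) + (s^s * (c^s)⁻¹) * τ ^ (((4:ℝ)-n)/2) := add_le_add h₁ h₂
    _ = (1 + s^s * (c^s)⁻¹) * τ ^ (((4:ℝ)-n)/2) := by ring

lemma pointwise_bound (c t ε r : ℝ) (hc : 0 < c) (ht : 0 ≤ t) (hr0 : 0 ≤ r) (hrε : r < ε) :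
    ((r^2)⁻¹ * |Real.sin (r*t/2)|^2 * Real.exp (-c*r^2*t))^2
      ≤ Real.exp (c*ε^2) * (min ((r^4)⁻¹) ((1+t)^4) * Real.exp (-(c*(1+t)) * r^2)) := by
  have hτ0 : (0:ℝ) < 1 + t := by linarith
  rcases eq_or_lt_of_le hr0 with h|h
  · subst h
    norm_num
    rw [min_eq_left (by positivity : (0:ℝ) ≤ (1+t)^4)]
    simp
  · -- r > 0
    have hS1 : |Real.sin (r*t/2)| ≤ 1 := abs_le.mpr ⟨Real.neg_one_le_sin _, Real.sin_le_one _⟩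
    have hS2 : |Real.sin (r*t/2)| ≤ r*t/2 := by
      have h' := Real.abs_sin_le_abs (x := r*t/2)
      rwa [abs_of_nonneg (show (0:ℝ) ≤ r*t/2 by positivity)] at h'
    have hSnn : (0:ℝ) ≤ |Real.sin (r*t/2)| := abs_nonneg _
    set S : ℝ := |Real.sin (r*t/2)|^2 with hSdef
    have hSnn2 : (0:ℝ) ≤ S := by positivity
    have key1 : S^2 * ((r^2)⁻¹)^2 ≤ min ((r^4)⁻¹) ((1+t)^4) := by
      refine le_min ?_ ?_
      · have hS21 : S^2 ≤ 1 := by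
          have : S ≤ 1 := by rw [hSdef]; nlinarith
          nlinarith
        have hre : ((r^2)⁻¹)^2 = (r^4)⁻¹ := by
          rw [inv_pow, ← pow_mul]
        calc S^2 * ((r^2)⁻¹)^2 ≤ 1 * ((r^2)⁻¹)^2 :=
              mul_le_mul_of_nonneg_right hS21 (by positivity)
          _ = (r^4)⁻¹ := by rw [one_mul, hre]
      · have hS2' : S ≤ (r*t/2)^2 := by rw [hSdef]; nlinarith
        have hS4 : S^2 ≤ (r*t/2)^4 := by nlinarith
        have hr4 : (0:ℝ) < r^4 := by positivity
        have hval : (r*t/2)^4 * ((r^2)⁻¹)^2 = (t/2)^4 := by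
          rw [inv_pow, ← pow_mul]
          field_simp
          ring
        calc S^2 * ((r^2)⁻¹)^2 ≤ (r*t/2)^4 * ((r^2)⁻¹)^2 :=
              mul_le_mul_of_nonneg_right hS4 (by positivity)
          _ = (t/2)^4 := hval
          _ ≤ (1+t)^4 := by
              apply pow_le_pow_left₀ (by positivity)
              linarith
    have key2 : (Real.exp (-c*r^2*t))^2 ≤ Real.exp (c*ε^2) * Real.exp (-(c*(1+t)) * r^2) := by
      have hE1 : Real.exp (-c*r^2*t) ≤ 1 := Real.exp_le_one_iff.2 (by
        have : (0:ℝ) ≤ c*r^2*t := by positivity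
        linarith)
      have hE0 : (0:ℝ) < Real.exp (-c*r^2*t) := Real.exp_pos _
      have hstep : (Real.exp (-c*r^2*t))^2 ≤ Real.exp (-c*r^2*t) := by nlinarith
      refine hstep.trans ?_
      rw [← Real.exp_add]
      apply Real.exp_le_exp.2
      have hr2 : r^2 ≤ ε^2 := by nlinarith
      nlinarith [mul_le_mul_of_nonneg_left hr2 hc.le]
    calc ((r^2)⁻¹ * |Real.sin (r*t/2)|^2 * Real.exp (-c*r^2*t))^2
        = (S^2 * ((r^2)⁻¹)^2) * (Real.exp (-c*r^2*t))^2 := by rw [hSdef]; ring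
      _ ≤ min ((r^4)⁻¹) ((1+t)^4) * (Real.exp (c*ε^2) * Real.exp (-(c*(1+t)) * r^2)) := by
          apply mul_le_mul key1 key2 (by positivity) ?_
          exact le_min (by positivity) (by positivity)
      _ = Real.exp (c*ε^2) * (min ((r^4)⁻¹) ((1+t)^4) * Real.exp (-(c*(1+t)) * r^2)) := by
          ring

lemma log_e_add_nonneg (t : ℝ) (ht : 0 ≤ t) : (1:ℝ) ≤ Real.log (Real.exp 1 + t) := by
  rw [Real.le_log_iff_exp_le (by positivity)]
  linarith

lemma calDTilde_nonneg (n : ℕ) (t : ℝ) (ht : 0 ≤ t) : 0 ≤ calDTilde n t := by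
  unfold calDTilde
  split_ifs with h1 h2
  · positivity
  · have := log_e_add_nonneg t ht
    positivity
  · positivity

lemma onedim (n : ℕ) (hn : 1 ≤ n) (c : ℝ) (hc : 0 < c) :
    ∃ C₁ : ℝ, 0 < C₁ ∧ ∀ t : ℝ, 0 ≤ t →
      ∫ y in Ioi (0:ℝ),
          y ^ (n-1) * (min ((y^4)⁻¹) ((1+t)^4) * Real.exp (-(c*(1+t)) * y^2))
        ≤ C₁ * (calDTilde n t)^2 := by
  by_cases h3 : n ≤ 3
  · refine ⟨2, two_pos, fun t ht => ?_⟩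
    rw [calDTilde, if_pos h3]
    have hsq : ((1+t) ^ ((2:ℝ) - (n:ℝ)/2))^2 = (1+t)^((4:ℝ)-(n:ℝ)) := by
      rw [← Real.rpow_natCast ((1+t) ^ ((2:ℝ) - (n:ℝ)/2)) 2,
        ← Real.rpow_mul (by linarith)]
      congr 1; push_cast; ring
    rw [hsq]
    exact onedim_le3 n hn h3 c hc t ht
  · by_cases h4 : n = 4
    · subst h4
      refine ⟨2 + c⁻¹^2, by positivity, fun t ht => ?_⟩
      rw [calDTilde, if_neg h3, if_pos rfl]
      have hL0 : (0:ℝ) ≤ Real.log (Real.exp 1 + t) := by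
        linarith [log_e_add_nonneg t ht]
      have hsq : ((Real.log (Real.exp 1 + t)) ^ ((1:ℝ)/2))^2
          = Real.log (Real.exp 1 + t) := by
        rw [← Real.rpow_natCast ((Real.log (Real.exp 1 + t)) ^ ((1:ℝ)/2)) 2,
          ← Real.rpow_mul hL0]
        norm_num
      rw [hsq]
      exact onedim_eq4 c hc t ht
    · have h5 : 5 ≤ n := by omega
      refine ⟨1 + ((n:ℝ)/2)^((n:ℝ)/2) * (c^((n:ℝ)/2))⁻¹, by positivity, fun t ht => ?_⟩
      rw [calDTilde, if_neg h3, if_neg h4]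
      have hsq : ((1+t) ^ ((1:ℝ) - (n:ℝ)/4))^2 = (1+t)^(((4:ℝ)-(n:ℝ))/2) := by
        rw [← Real.rpow_natCast ((1+t) ^ ((1:ℝ) - (n:ℝ)/4)) 2,
          ← Real.rpow_mul (by linarith)]
        congr 1; push_cast; ring
      rw [hsq]
      exact onedim_ge5 n h5 c hc t ht

lemma gauss_integrable (n : ℕ) (b : ℝ) (hb : 0 < b) :
    Integrable (fun v : EuclideanSpace ℝ (Fin n) => Real.exp (-b * ‖v‖^2)) := by
  have h := GaussianFourier.integrable_cexp_neg_mul_sq_norm_add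
    (V := EuclideanSpace ℝ (Fin n)) (b := (b:ℂ)) (by simpa using hb) 0 0
  refine h.norm.congr (Filter.Eventually.of_forall fun v => ?_)
  simp [Complex.norm_exp, ← Complex.ofReal_pow]

/-- For `n ≥ 1`, `c > 0`, `ε > 0`, there is `C > 0` such that for all `t ≥ 0`,
`‖ |ξ|⁻² |sin(|ξ|t/2)|² e^{-c|ξ|²t} ‖_{L²(|ξ|<ε)} ≤ C 𝒟̃_n(1+t)`. -/
theorem stmt3 (n : ℕ) (hn : 1 ≤ n) (c ε : ℝ) (hc : 0 < c) (hε : 0 < ε) :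
    ∃ C : ℝ, 0 < C ∧ ∀ t : ℝ, 0 ≤ t →
      eLpNorm (fun ξ : EuclideanSpace ℝ (Fin n) =>
          (‖ξ‖ ^ 2)⁻¹ * |Real.sin (‖ξ‖ * t / 2)| ^ 2 * Real.exp (-c * ‖ξ‖ ^ 2 * t)) 2
          (volume.restrict {ξ : EuclideanSpace ℝ (Fin n) | ‖ξ‖ < ε})
        ≤ ENNReal.ofReal (C * calDTilde n t) := by
  haveI : Nontrivial (EuclideanSpace ℝ (Fin n)) := by
    apply Module.nontrivial_of_finrank_pos (R := ℝ)
    rw [finrank_euclideanSpace_fin]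
    omega
  obtain ⟨C₁, hC₁, h1d⟩ := onedim n hn c hc
  set κ : ℝ := (volume (Metric.ball (0 : EuclideanSpace ℝ (Fin n)) 1)).toReal with hκdef
  have hκ0 : 0 ≤ κ := ENNReal.toReal_nonneg
  set K : ℝ := Real.exp (c * ε^2) with hKdef
  have hK0 : (0:ℝ) < K := Real.exp_pos _
  set C₀ : ℝ := n * κ * K * C₁ with hC₀def
  have hC₀ : 0 ≤ C₀ := by positivity
  refine ⟨1 + C₀, by positivity, fun t ht => ?_⟩
  have hD0 : 0 ≤ calDTilde n t := calDTilde_nonneg n t ht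
  have hCD : 0 ≤ (1 + C₀) * calDTilde n t := by positivity
  have hτ0 : (0:ℝ) < 1 + t := by linarith
  set F : ℝ → ℝ :=
    fun r => K * (min ((r^4)⁻¹) ((1+t)^4) * Real.exp (-(c*(1+t)) * r^2)) with hFdef
  set S : Set (EuclideanSpace ℝ (Fin n)) := {ξ | ‖ξ‖ < ε} with hSdef
  have hSm : MeasurableSet S :=
    (isOpen_lt continuous_norm continuous_const).measurableSet
  set f : EuclideanSpace ℝ (Fin n) → ℝ := fun ξ =>
    (‖ξ‖ ^ 2)⁻¹ * |Real.sin (‖ξ‖ * t / 2)| ^ 2 * Real.exp (-c * ‖ξ‖ ^ 2 * t) with hfdef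
  have hFnn : ∀ r : ℝ, 0 ≤ r → 0 ≤ F r := by
    intro r hr
    rw [hFdef]
    have : 0 ≤ min ((r^4)⁻¹) ((1+t)^4) := le_min (by positivity) (by positivity)
    positivity
  have hFmeas : Measurable (fun ξ : EuclideanSpace ℝ (Fin n) => F ‖ξ‖) := by
    rw [hFdef]
    fun_prop
  have hFint : Integrable (fun ξ : EuclideanSpace ℝ (Fin n) => F ‖ξ‖) := by
    have hg : Integrable (fun ξ : EuclideanSpace ℝ (Fin n) =>
        (K * (1+t)^4) * Real.exp (-(c*(1+t)) * ‖ξ‖^2)) :=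
      (gauss_integrable n (c*(1+t)) (by positivity)).const_mul _
    refine hg.mono' hFmeas.aestronglyMeasurable (Filter.Eventually.of_forall fun ξ => ?_)
    rw [Real.norm_eq_abs, abs_of_nonneg (hFnn _ (norm_nonneg ξ)), hFdef]
    calc K * (min ((‖ξ‖^4)⁻¹) ((1+t)^4) * Real.exp (-(c*(1+t)) * ‖ξ‖^2))
        ≤ K * ((1+t)^4 * Real.exp (-(c*(1+t)) * ‖ξ‖^2)) :=
          mul_le_mul_of_nonneg_left
            (mul_le_mul_of_nonneg_right (min_le_right _ _) (Real.exp_pos _).le) hK0.le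
      _ = (K * (1+t)^4) * Real.exp (-(c*(1+t)) * ‖ξ‖^2) := by ring
  have hnn : 0 ≤ᵐ[volume] (fun ξ : EuclideanSpace ℝ (Fin n) => F ‖ξ‖) :=
    Filter.Eventually.of_forall fun ξ => hFnn _ (norm_nonneg ξ)
  have hpt : ∀ ξ ∈ S, (↑‖f ξ‖₊ : ℝ≥0∞) ^ (2:ℝ) ≤ ENNReal.ofReal (F ‖ξ‖) := by
    intro ξ hξ
    have hfx0 : 0 ≤ f ξ := by rw [hfdef]; positivity
    rw [← enorm_eq_nnnorm, Real.enorm_eq_ofReal hfx0, ENNReal.ofReal_rpow_of_nonneg hfx0 (by norm_num)]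
    apply ENNReal.ofReal_le_ofReal
    have h2 : (f ξ) ^ (2:ℝ) = (f ξ)^2 := by
      rw [← Real.rpow_natCast (f ξ) 2]; norm_num
    rw [h2, hfdef, hFdef]
    exact pointwise_bound c t ε ‖ξ‖ hc ht (norm_nonneg _) hξ
  have hlin : ∫⁻ ξ in S, (↑‖f ξ‖₊ : ℝ≥0∞) ^ (2:ℝ) ∂volume
      ≤ ENNReal.ofReal (((1 + C₀) * calDTilde n t)^2) := by
    calc ∫⁻ ξ in S, (↑‖f ξ‖₊ : ℝ≥0∞) ^ (2:ℝ) ∂volume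
        ≤ ∫⁻ ξ in S, ENNReal.ofReal (F ‖ξ‖) ∂volume :=
          setLIntegral_mono (by fun_prop) hpt
      _ ≤ ∫⁻ ξ, ENNReal.ofReal (F ‖ξ‖) ∂volume := setLIntegral_le_lintegral _ _
      _ = ENNReal.ofReal (∫ ξ, F ‖ξ‖) := (ofReal_integral_eq_lintegral_ofReal hFint hnn).symm
      _ ≤ ENNReal.ofReal (((1 + C₀) * calDTilde n t)^2) := by
          apply ENNReal.ofReal_le_ofReal
          have hpolar := MeasureTheory.integral_fun_norm_addHaar
            (μ := (volume : Measure (EuclideanSpace ℝ (Fin n)))) F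
          rw [finrank_euclideanSpace_fin] at hpolar
          rw [hpolar]
          have hre : (∫ y in Ioi (0:ℝ), y ^ (n-1) • F y)
              = ∫ y in Ioi (0:ℝ), K * (y ^ (n-1) *
                  (min ((y^4)⁻¹) ((1+t)^4) * Real.exp (-(c*(1+t)) * y^2))) := by
            congr 1
            funext y
            rw [smul_eq_mul, hFdef]
            ring
          rw [hre, integral_const_mul, nsmul_eq_mul, smul_eq_mul]
          have hI := h1d t ht
          have hstep : (n:ℝ) * (κ * (K * (∫ y in Ioi (0:ℝ), y ^ (n-1) *
                (min ((y^4)⁻¹) ((1+t)^4) * Real.exp (-(c*(1+t)) * y^2)))))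
              ≤ (n:ℝ) * (κ * (K * (C₁ * (calDTilde n t)^2))) := by
            apply mul_le_mul_of_nonneg_left _ (Nat.cast_nonneg n)
            apply mul_le_mul_of_nonneg_left _ hκ0
            exact mul_le_mul_of_nonneg_left hI hK0.le
          refine hstep.trans ?_
          have heq : (n:ℝ) * (κ * (K * (C₁ * (calDTilde n t)^2)))
              = C₀ * (calDTilde n t)^2 := by
            rw [hC₀def]; ring
          rw [heq]
          nlinarith [sq_nonneg (calDTilde n t), hC₀,
            mul_nonneg (mul_nonneg hC₀ hC₀) (sq_nonneg (calDTilde n t))]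
  rw [eLpNorm_eq_lintegral_rpow_enorm_toReal (by norm_num) (by norm_num)]
  simp only [ENNReal.toReal_ofNat]
  calc (∫⁻ ξ in S, (↑‖f ξ‖₊ : ℝ≥0∞) ^ (2:ℝ) ∂volume) ^ (1/(2:ℝ))
      ≤ (ENNReal.ofReal (((1 + C₀) * calDTilde n t)^2)) ^ (1/(2:ℝ)) :=
        ENNReal.rpow_le_rpow hlin (by norm_num)
    _ = ENNReal.ofReal ((1 + C₀) * calDTilde n t) := by
        rw [ENNReal.ofReal_rpow_of_nonneg (sq_nonneg _) (by norm_num),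
          ← Real.sqrt_eq_rpow, Real.sqrt_sq hCD]
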